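/- Let X_1, …, X_n be i.i.d. random variables taking values in the integers ≥ −1, let S_0 = 0 and S_i = S_{i−1} + X_i for 1 ≤ i ≤ n, and suppose the event Bridge = {S_n = −1} has positive probability. Let R(S) denote the path re-rooted at the minimum: R(S) is the walk whose steps are the σ-th cyclic shift of (X_1,…,X_n), where σ is the first index at which (S_i) attains its minimum over i ∈ {1,…,n}. Then the conditional law of the path R(S) = (R(S)_0, …, R(S)_n) given Bridge equals the conditional law of the path S = (S_0, …, S_n) given the event Exc = {S_n = −1 and S_i ≥ 0 for all 1 ≤ i < n}. -/

import Mathlib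

open MeasureTheory ProbabilityTheory Finset
open scoped ProbabilityTheory
open scoped ENNReal
open Fin.NatCast

namespace Vervaat

lemma sum_Icc_one {M : Type*} [AddCommMonoid M] (f : ℕ → M) (k : ℕ) :
    ∑ j ∈ Finset.Icc 1 k, f j = ∑ j ∈ Finset.range k, f (j + 1) := by
  induction k with
  | zero => simp
  | succ k ih =>
      rw [Finset.sum_range_succ, ← ih, Finset.sum_Icc_succ_top (by omega)]

variable {n : ℕ} [NeZero n]

/-- Partial sums of the (cyclically extended) steps. -/
def sf (x : Fin n → ℤ) (i : ℕ) : ℤ := ∑ j ∈ Finset.range i, x j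

/-- Cyclic shift of the steps by `k`. -/
def shiftT (k : ℕ) (x : Fin n → ℤ) : Fin n → ℤ := fun i => x ((k : Fin n) + i)

lemma sf_shift (k : ℕ) (x : Fin n → ℤ) (i : ℕ) :
    sf x (k + i) = sf x k + sf (shiftT k x) i := by
  induction i with
  | zero => simp [sf]
  | succ i ih =>
      have h1 : k + (i + 1) = (k + i) + 1 := by omega
      have h2 : sf x ((k + i) + 1) = sf x (k + i) + x ((k + i : ℕ) : Fin n) := by
        rw [sf, sf, Finset.sum_range_succ]
      have h3 : sf (shiftT k x) (i + 1) = sf (shiftT k x) i + x ((k + i : ℕ) : Fin n) := by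
        rw [sf, sf, Finset.sum_range_succ, shiftT]
        have : ((k : Fin n) + (i : Fin n)) = ((k + i : ℕ) : Fin n) := by push_cast; ring
        rw [this]
      rw [h1, h2, h3, ih]; ring

lemma sf_fin (x : Fin n → ℤ) : sf x n = ∑ i : Fin n, x i := by
  rw [sf, ← Fin.sum_univ_eq_sum_range (fun j => x (j : Fin n)) n]
  exact Finset.sum_congr rfl fun i _ => by rw [Fin.cast_val_eq_self]

lemma sf_total (k : ℕ) (x : Fin n → ℤ) : sf (shiftT k x) n = sf x n := by
  rw [sf_fin, sf_fin]
  exact Fintype.sum_equiv (Equiv.addLeft (k : Fin n)) _ _ (fun i => rfl)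

lemma sf_periodic (x : Fin n → ℤ) (i : ℕ) : sf x (i + n) = sf x i + sf x n := by
  rw [sf_shift, sf_total]

/-- Set of argmins of the walk over `{1,…,n}`. -/
def argminSet (x : Fin n → ℤ) : Set ℕ :=
  {i | i ∈ Finset.Icc 1 n ∧ ∀ j ∈ Finset.Icc 1 n, sf x i ≤ sf x j}

/-- First argmin. -/
noncomputable def sg (x : Fin n → ℤ) : ℕ := sInf (argminSet x)

lemma argmin_nonempty (x : Fin n → ℤ) : (argminSet x).Nonempty := by
  obtain ⟨i, hi, hmin⟩ := Finset.exists_min_image (Finset.Icc 1 n) (sf x)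
    ⟨1, by simp [Nat.one_le_iff_ne_zero.mpr (NeZero.ne n)]⟩
  exact ⟨i, hi, hmin⟩

lemma sg_mem (x : Fin n → ℤ) : sg x ∈ argminSet x := Nat.sInf_mem (argmin_nonempty x)

lemma sg_one_le (x : Fin n → ℤ) : 1 ≤ sg x := by
  have := (sg_mem x).1; simp only [Finset.mem_Icc] at this; exact this.1

lemma sg_le (x : Fin n → ℤ) : sg x ≤ n := by
  have := (sg_mem x).1; simp only [Finset.mem_Icc] at this; exact this.2

lemma sg_min (x : Fin n → ℤ) : ∀ j ∈ Finset.Icc 1 n, sf x (sg x) ≤ sf x j := (sg_mem x).2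

lemma sg_strict (x : Fin n → ℤ) {i : ℕ} (h1 : 1 ≤ i) (h2 : i < sg x) :
    sf x (sg x) < sf x i := by
  have hni : i ∉ argminSet x := Nat.notMem_of_lt_sInf h2
  have hiIcc : i ∈ Finset.Icc 1 n := by
    simp only [Finset.mem_Icc]; exact ⟨h1, le_trans (le_of_lt h2) (sg_le x)⟩
  have : ¬ ∀ j ∈ Finset.Icc 1 n, sf x i ≤ sf x j := fun h => hni ⟨hiIcc, h⟩
  push_neg at this
  obtain ⟨j, hj, hlt⟩ := this
  exact lt_of_le_of_lt (sg_min x j hj) hlt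

/-- Cycle lemma, existence: re-rooting at the first minimum gives an excursion. -/
lemma shift_sg_excursion (x : Fin n → ℤ) (hB : sf x n = -1) :
    ∀ i, 1 ≤ i → i < n → 0 ≤ sf (shiftT (sg x) x) i := by
  intro i hi1 hin
  have hσ1 : 1 ≤ sg x := sg_one_le x
  have hσn : sg x ≤ n := sg_le x
  have hkey : sf x (sg x) ≤ sf x (sg x + i) := by
    by_cases hc : sg x + i ≤ n
    · exact sg_min x _ (Finset.mem_Icc.mpr ⟨by omega, hc⟩)
    · have hm1 : 1 ≤ sg x + i - n := by omega
      have hm2 : sg x + i - n < sg x := by omega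
      have heq : sg x + i = (sg x + i - n) + n := by omega
      rw [heq, sf_periodic, hB]
      have := sg_strict x hm1 hm2
      omega
  have := sf_shift (sg x) x i
  omega

/-- Cycle lemma, uniqueness: if the `k`-th shift is an excursion then `k` is the first argmin. -/
lemma shift_excursion_unique (x : Fin n → ℤ) (hB : sf x n = -1) {k : ℕ}
    (hk1 : 1 ≤ k) (hkn : k ≤ n)
    (hexc : ∀ i, 1 ≤ i → i < n → 0 ≤ sf (shiftT k x) i) : k = sg x := by
  have hshift : ∀ i, sf (shiftT k x) i = sf x (k + i) - sf x k := by
    intro i; have := sf_shift k x i; omega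
  -- k is an argmin, and strictly less than everything before it
  have hmin : ∀ j ∈ Finset.Icc 1 n, sf x k ≤ sf x j := by
    intro j hj
    simp only [Finset.mem_Icc] at hj
    rcases lt_trichotomy j k with hlt | heq | hgt
    · -- j < k : use i = n + j - k
      have h1 : 1 ≤ n + j - k := by omega
      have h2 : n + j - k < n := by omega
      have h3 := hexc _ h1 h2
      rw [hshift] at h3
      have heq : k + (n + j - k) = j + n := by omega
      rw [heq, sf_periodic, hB] at h3
      omega
    · rw [heq]
    · have h1 : 1 ≤ j - k := by omega
      have h2 : j - k < n := by omega
      have h3 := hexc _ h1 h2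
      rw [hshift] at h3
      have heq : k + (j - k) = j := by omega
      rw [heq] at h3
      omega
  have hstrict : ∀ j, 1 ≤ j → j < k → sf x k < sf x j := by
    intro j hj1 hjk
    have h1 : 1 ≤ n + j - k := by omega
    have h2 : n + j - k < n := by omega
    have h3 := hexc _ h1 h2
    rw [hshift] at h3
    have heq : k + (n + j - k) = j + n := by omega
    rw [heq, sf_periodic, hB] at h3
    omega
  have hk_mem : k ∈ argminSet x := ⟨Finset.mem_Icc.mpr ⟨hk1, hkn⟩, hmin⟩
  have h1 : sg x ≤ k := Nat.sInf_le hk_mem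
  rcases eq_or_lt_of_le h1 with h | h
  · exact h.symm
  · exact absurd (sg_min x k (Finset.mem_Icc.mpr ⟨hk1, hkn⟩))
      (not_le.mpr (hstrict _ (sg_one_le x) h))

/-- The re-rooted walk. -/
noncomputable def rf (x : Fin n → ℤ) (k : ℕ) : ℤ :=
  ∑ j ∈ Finset.Icc 1 k, x ((sg x + j - 1 : ℕ) : Fin n)

lemma rf_eq (x : Fin n → ℤ) (k : ℕ) : rf x k = sf (shiftT (sg x) x) k := by
  rw [rf, sum_Icc_one, sf]
  refine Finset.sum_congr rfl fun j _ => ?_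
  have h1 : sg x + (j + 1) - 1 = sg x + j := by omega
  rw [h1, shiftT]
  congr 1
  push_cast; ring


variable {n : ℕ} [NeZero n]

/-- Bridge set on step space. -/
def Bs : Set (Fin n → ℤ) := {x | sf x n = -1}

/-- Excursion set on step space. -/
def Es : Set (Fin n → ℤ) :=
  {x | sf x n = -1 ∧ ∀ i, 1 ≤ i → i < n → 0 ≤ sf x i}

/-- The walk path. -/
def pathS (x : Fin n → ℤ) : Fin (n + 1) → ℤ := fun i => sf x i.val

/-- The re-rooted walk path. -/
noncomputable def pathR (x : Fin n → ℤ) : Fin (n + 1) → ℤ := fun i => rf x i.val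

lemma pathS_shift_sg (x : Fin n → ℤ) : pathS (shiftT (sg x) x) = pathR x :=
  funext fun i => (rf_eq x i.val).symm

lemma decomp (A : Set (Fin (n + 1) → ℤ)) :
    Bs ∩ pathR ⁻¹' A = ⋃ k ∈ Finset.Icc 1 n, shiftT k ⁻¹' (Es ∩ pathS ⁻¹' A) := by
  ext x
  simp only [Bs, Es, Set.mem_inter_iff, Set.mem_setOf_eq, Set.mem_preimage, Set.mem_iUnion,
    exists_prop, Finset.mem_Icc]
  constructor
  · rintro ⟨hxB, hxA⟩
    exact ⟨sg x, ⟨sg_one_le x, sg_le x⟩,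
      ⟨by rw [sf_total]; exact hxB, shift_sg_excursion x hxB⟩,
      by rw [pathS_shift_sg]; exact hxA⟩
  · rintro ⟨k, ⟨hk1, hkn⟩, ⟨hE1, hE2⟩, hA⟩
    have hxB : sf x n = -1 := by rw [← sf_total k x]; exact hE1
    have hk : k = sg x := shift_excursion_unique x hxB hk1 hkn hE2
    rw [hk, pathS_shift_sg] at hA
    exact ⟨hxB, hA⟩

lemma disj (A : Set (Fin (n + 1) → ℤ)) :
    Set.PairwiseDisjoint ↑(Finset.Icc 1 n)
      (fun k => shiftT k ⁻¹' (Es ∩ pathS ⁻¹' A) : ℕ → Set (Fin n → ℤ)) := by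
  intro k hk k' hk' hne
  simp only [Finset.coe_Icc, Set.mem_Icc] at hk hk'
  refine Set.disjoint_left.mpr fun x hx hx' => hne ?_
  simp only [Es, Set.mem_preimage, Set.mem_inter_iff, Set.mem_setOf_eq] at hx hx'
  have hxB : sf x n = -1 := by rw [← sf_total k x]; exact hx.1.1
  have hxB' : sf x n = -1 := by rw [← sf_total k' x]; exact hx'.1.1
  rw [shift_excursion_unique x hxB hk.1 hk.2 hx.1.2,
      shift_excursion_unique x hxB' hk'.1 hk'.2 hx'.1.2]

open MeasureTheory in
/-- Any measure on steps whose singletons factor as a product is invariant under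
cyclic shifts. -/
lemma map_shiftT (ν : Measure (Fin n → ℤ)) (m : Measure ℤ)
    (hν : ∀ y, ν {y} = ∏ i, m {y i}) (k : ℕ) : ν.map (shiftT k) = ν := by
  apply MeasureTheory.Measure.ext_of_singleton
  intro y
  rw [Measure.map_apply (measurable_of_countable _) (measurableSet_singleton y)]
  have hpre : shiftT k ⁻¹' {y} = {fun i => y (-(k : Fin n) + i)} := by
    ext x
    simp only [Set.mem_preimage, Set.mem_singleton_iff, funext_iff, shiftT]
    constructor
    · intro h i
      have := h (-(k : Fin n) + i)
      rwa [add_neg_cancel_left] at this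
    · intro h i
      rw [h ((k : Fin n) + i), neg_add_cancel_left]
  rw [hpre, hν, hν]
  exact Equiv.prod_comp (Equiv.addLeft (-(k : Fin n))) (fun b => m {y b})

open MeasureTheory ProbabilityTheory in
open scoped ProbabilityTheory in
lemma map_cond {Ω : Type*} [MeasurableSpace Ω] (μ : MeasureTheory.Measure Ω) {α : Type*}
    [MeasurableSpace α] (V : Ω → α) (hV : Measurable V) (s : Set α) (hs : MeasurableSet s) :
    (μ[|V ⁻¹' s]).map V = (μ.map V)[|s] := by
  ext t ht
  rw [Measure.map_apply hV ht, ProbabilityTheory.cond_apply (hV hs),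
    ProbabilityTheory.cond_apply hs, Measure.map_apply hV hs,
    Measure.map_apply hV (hs.inter ht), Set.preimage_inter]

end Vervaat

/-- **Discrete Vervaat transform.**  Let `X 1, …, X n` be i.i.d. integer-valued random
variables with values `≥ -1`, with partial-sum path `S 0 = 0`, `S i = X 1 + ⋯ + X i`.
Let `σ` be the first index in `{1,…,n}` at which `(S i)` attains its minimum over
`{1,…,n}`, and let `R` be the path whose steps are the `σ`-th cyclic shift of
`(X 1, …, X n)` (re-rooting at the minimum).  If `Bridge = {S n = -1}` has positive
probability, then the conditional law of the path `(R 0, …, R n)` given `Bridge`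
equals the conditional law of the path `(S 0, …, S n)` given
`Exc = {S n = -1` and `S i ≥ 0` for all `1 ≤ i < n}`. -/
theorem stmt2 {Ω : Type*} [MeasurableSpace Ω] (μ : Measure Ω) [IsProbabilityMeasure μ]
    (n : ℕ) (hn : 1 ≤ n)
    (X : ℕ → Ω → ℤ)
    (hmeas : ∀ i, Measurable (X i))
    (hindep : iIndepFun (fun i : Fin n => X (i.val + 1)) μ)
    (hident : ∀ i ∈ Finset.Icc 1 n, μ.map (X i) = μ.map (X 1))
    (hval : ∀ i ∈ Finset.Icc 1 n, ∀ ω, -1 ≤ X i ω)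
    (S : ℕ → Ω → ℤ)
    (hS : ∀ i ω, S i ω = ∑ j ∈ Finset.Icc 1 i, X j ω)
    (Bridge : Set Ω) (hBridge : Bridge = {ω | S n ω = -1})
    (hBpos : μ Bridge ≠ 0)
    (Exc : Set Ω)
    (hExc : Exc = {ω | S n ω = -1 ∧ ∀ i, 1 ≤ i → i < n → 0 ≤ S i ω})
    (hEpos : μ Exc ≠ 0)
    (σ : Ω → ℕ)
    (hσ : ∀ ω, σ ω = sInf {i | i ∈ Finset.Icc 1 n ∧ ∀ j ∈ Finset.Icc 1 n, S i ω ≤ S j ω})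
    (R : ℕ → Ω → ℤ)
    (hR : ∀ k ω, R k ω = ∑ j ∈ Finset.Icc 1 k, X (((σ ω + j - 1) % n) + 1) ω) :
    (μ[|Bridge]).map (fun ω => fun i : Fin (n + 1) => R i.val ω) =
      (μ[|Exc]).map (fun ω => fun i : Fin (n + 1) => S i.val ω) := by

  haveI : NeZero n := ⟨by omega⟩
  have hV : Measurable (fun ω => fun i : Fin n => X (i.val + 1) ω) :=
    measurable_pi_lambda _ fun i => hmeas _
  -- the joint law of the steps factors over singletons
  have hsing : ∀ y : Fin n → ℤ,
      (μ.map (fun ω => fun i : Fin n => X (i.val + 1) ω)) {y}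
        = ∏ i : Fin n, (μ.map (X 1)) {y i} := by
    intro y
    rw [Measure.map_apply hV (measurableSet_singleton y)]
    have hpre : (fun ω => fun i : Fin n => X (i.val + 1) ω) ⁻¹' {y}
        = ⋂ i : Fin n, (X (i.val + 1)) ⁻¹' {y i} := by
      ext ω
      simp [funext_iff]
    rw [hpre, hindep.meas_iInter (fun i => ⟨{y i}, measurableSet_singleton _, rfl⟩)]
    refine Finset.prod_congr rfl fun i _ => ?_
    rw [← Measure.map_apply (hmeas _) (measurableSet_singleton (y i)),
      hident (i.val + 1) (Finset.mem_Icc.mpr ⟨by omega, by have := i.isLt; omega⟩)]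
  have hinv : ∀ k, (μ.map (fun ω => fun i : Fin n => X (i.val + 1) ω)).map (Vervaat.shiftT k)
      = μ.map (fun ω => fun i : Fin n => X (i.val + 1) ω) :=
    fun k => Vervaat.map_shiftT _ (μ.map (X 1)) hsing k
  -- transfer of the data to step space
  have hSV : ∀ i : ℕ, i ≤ n → ∀ ω, S i ω = Vervaat.sf (fun a : Fin n => X (a.val + 1) ω) i := by
    intro i hi ω
    rw [hS, Vervaat.sum_Icc_one (fun j => X j ω) i]
    simp only [Vervaat.sf]
    refine Finset.sum_congr rfl fun j hj => ?_
    simp only [Finset.mem_range] at hj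
    have hval' : ((j : Fin n)).val = j := by
      rw [Fin.val_natCast]; exact Nat.mod_eq_of_lt (by omega)
    rw [hval']
  have hσV : ∀ ω, σ ω = Vervaat.sg (fun a : Fin n => X (a.val + 1) ω) := by
    intro ω
    rw [hσ, Vervaat.sg]
    congr 1
    rw [Vervaat.argminSet]
    ext i
    simp only [Set.mem_setOf_eq]
    constructor
    · rintro ⟨hi, h⟩
      refine ⟨hi, fun j hj => ?_⟩
      rw [← hSV i (Finset.mem_Icc.mp hi).2 ω, ← hSV j (Finset.mem_Icc.mp hj).2 ω]
      exact h j hj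
    · rintro ⟨hi, h⟩
      refine ⟨hi, fun j hj => ?_⟩
      rw [hSV i (Finset.mem_Icc.mp hi).2 ω, hSV j (Finset.mem_Icc.mp hj).2 ω]
      exact h j hj
  have hRV : ∀ k (ω : Ω), R k ω = Vervaat.rf (fun a : Fin n => X (a.val + 1) ω) k := by
    intro k ω
    rw [hR]
    simp only [Vervaat.rf]
    refine Finset.sum_congr rfl fun j hj => ?_
    rw [hσV ω, Fin.val_natCast]
  have hBV : Bridge = (fun ω => fun i : Fin n => X (i.val + 1) ω) ⁻¹' Vervaat.Bs := by
    rw [hBridge]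
    ext ω
    simp only [Set.mem_setOf_eq, Set.mem_preimage, Vervaat.Bs]
    rw [hSV n le_rfl ω]
  have hEV : Exc = (fun ω => fun i : Fin n => X (i.val + 1) ω) ⁻¹' Vervaat.Es := by
    rw [hExc]
    ext ω
    simp only [Set.mem_setOf_eq, Set.mem_preimage, Vervaat.Es]
    constructor
    · rintro ⟨h1, h2⟩
      exact ⟨by rw [← hSV n le_rfl ω]; exact h1,
        fun i hi1 hin => by rw [← hSV i (le_of_lt hin) ω]; exact h2 i hi1 hin⟩
    · rintro ⟨h1, h2⟩
      exact ⟨by rw [hSV n le_rfl ω]; exact h1,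
        fun i hi1 hin => by rw [hSV i (le_of_lt hin) ω]; exact h2 i hi1 hin⟩
  have hfR : (fun ω => fun i : Fin (n + 1) => R i.val ω)
      = Vervaat.pathR ∘ (fun ω => fun i : Fin n => X (i.val + 1) ω) := by
    funext ω i
    simp only [Function.comp_apply, Vervaat.pathR]
    exact hRV i.val ω
  have hfS : (fun ω => fun i : Fin (n + 1) => S i.val ω)
      = Vervaat.pathS ∘ (fun ω => fun i : Fin n => X (i.val + 1) ω) := by
    funext ω i
    simp only [Function.comp_apply, Vervaat.pathS]
    exact hSV i.val (Nat.lt_succ_iff.mp i.isLt) ω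
  -- the counting identity from the cycle lemma
  have hcount : ∀ A : Set (Fin (n + 1) → ℤ),
      (μ.map (fun ω => fun i : Fin n => X (i.val + 1) ω)) (Vervaat.Bs ∩ Vervaat.pathR ⁻¹' A)
        = n * (μ.map (fun ω => fun i : Fin n => X (i.val + 1) ω))
            (Vervaat.Es ∩ Vervaat.pathS ⁻¹' A) := by
    intro A
    rw [Vervaat.decomp A,
      measure_biUnion_finset (Vervaat.disj A) (fun k _ => (Set.to_countable _).measurableSet)]
    rw [Finset.sum_congr rfl (fun k _ => by
      rw [← Measure.map_apply (measurable_of_countable (Vervaat.shiftT k))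
        (Set.to_countable _).measurableSet, hinv k])]
    rw [Finset.sum_const, Nat.card_Icc, Nat.add_sub_cancel, nsmul_eq_mul]
  have hBn : (μ.map (fun ω => fun i : Fin n => X (i.val + 1) ω)) Vervaat.Bs
      = n * (μ.map (fun ω => fun i : Fin n => X (i.val + 1) ω)) Vervaat.Es := by
    have := hcount Set.univ
    simpa using this
  have hEs0 : (μ.map (fun ω => fun i : Fin n => X (i.val + 1) ω)) Vervaat.Es ≠ 0 := by
    rw [Measure.map_apply hV (Set.to_countable _).measurableSet, ← hEV]
    exact hEpos
  have hEsT : (μ.map (fun ω => fun i : Fin n => X (i.val + 1) ω)) Vervaat.Es ≠ ⊤ := by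
    haveI : IsProbabilityMeasure (μ.map (fun ω => fun i : Fin n => X (i.val + 1) ω)) :=
      Measure.isProbabilityMeasure_map hV.aemeasurable
    exact measure_ne_top _ _
  have hn0 : (n : ℝ≥0∞) ≠ 0 := Nat.cast_ne_zero.mpr (by omega)
  have hnT : (n : ℝ≥0∞) ≠ ⊤ := ENNReal.natCast_ne_top n
  -- put everything together
  rw [hfR, hfS, hBV, hEV,
    ← Measure.map_map (measurable_of_countable Vervaat.pathR) hV,
    ← Measure.map_map (measurable_of_countable Vervaat.pathS) hV,
    Vervaat.map_cond μ _ hV _ (Set.to_countable _).measurableSet,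
    Vervaat.map_cond μ _ hV _ (Set.to_countable _).measurableSet]
  ext A hA
  rw [Measure.map_apply (measurable_of_countable _) hA,
    Measure.map_apply (measurable_of_countable _) hA,
    ProbabilityTheory.cond_apply (Set.to_countable _).measurableSet,
    ProbabilityTheory.cond_apply (Set.to_countable _).measurableSet,
    hcount A, hBn, ENNReal.mul_inv (Or.inl hn0) (Or.inl hnT), mul_mul_mul_comm,
    ENNReal.inv_mul_cancel hn0 hnT, one_mul]
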